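/- Let A be a commutative Q-algebra and F an A-module. For n ≥ 2, define the switch operator σ on the module R^n(F) := S^{n-1}(F) ⊗_A F (where S denotes the symmetric power) by σ(m_1⋯m_n) = Σ_{i=1}^{n-1} m_n m_{n-1}⋯m_{n-i+1} m_1 m_2⋯m_{n-i}, i.e., the sum of the n-1 nontrivial cyclic rotations. Then σ is a well-defined A-linear map on R^n(F), i.e., it respects the symmetry in the first n-1 factors. -/

import Mathlib

open scoped TensorProduct

noncomputable section

variable (A : Type) [CommRing A]
variable (F : Type) [AddCommGroup F] [Module A F]

/-- `n`-fold tensor power `T^n(F)`. -/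
abbrev TPow (n : ℕ) := PiTensorProduct A (fun _ : Fin n => F)

/-- The submodule of symmetry relations. -/
def symRel (n : ℕ) : Submodule A (TPow A F n) :=
  Submodule.span A
    {x | ∃ (m : Fin n → F) (e : Equiv.Perm (Fin n)),
      x = PiTensorProduct.tprod A m - PiTensorProduct.tprod A (m ∘ e)}

/-- Symmetric power `S^n(F)`. -/
abbrev SymPow (n : ℕ) := TPow A F n ⧸ symRel A F n

/-- Class of the word `m₀ ⋯ m_{n-1}` in `S^n(F)`. -/
def mkS {n : ℕ} (m : Fin n → F) : SymPow A F n :=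
  Submodule.Quotient.mk (PiTensorProduct.tprod A m)

/-- Class of a list of elements of `F` in the symmetric power. -/
def mkSL (l : List F) : SymPow A F l.length := mkS A F l.get

/-- `RPow A F n` is `R^{n+1}(F) = S^n(F) ⊗_A F`. -/
abbrev RPow (n : ℕ) := SymPow A F n ⊗[A] F

/-- Class of the word `m₀ ⋯ m_n` in `R^{n+1}(F) = S^n(F) ⊗ F`. -/
def mkR {n : ℕ} (m : Fin (n + 1) → F) : RPow A F n :=
  mkS A F (fun i : Fin n => m i.castSucc) ⊗ₜ[A] m (Fin.last n)

/-- The `i`-th "rotation" of the word `m` appearing in the definition of the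
switch operator: `m_n m_{n-1} ⋯ m_{n-i+1} m_0 m_1 ⋯ m_{n-i}` (0-indexed). -/
def rot {n : ℕ} (m : Fin (n + 1) → F) (i : ℕ) : Fin (n + 1) → F := fun j =>
  if j.val < i then m ⟨n - j.val, by have := j.isLt; omega⟩
  else m ⟨j.val - i, by have := j.isLt; omega⟩

/-- `σ` is the switch operator on `R^{n+1}(F)`:
`σ(m_0⋯m_n) = ∑_{i=1}^{n} m_n m_{n-1}⋯m_{n-i+1} m_0 m_1 ⋯ m_{n-i}`. -/
def IsSwitch (n : ℕ) (σ : RPow A F n →ₗ[A] RPow A F n) : Prop :=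
  ∀ m : Fin (n + 1) → F,
    σ (mkR A F m) = ∑ i ∈ Finset.Icc 1 n, mkR A F (rot F m i)

/-- `K^{n+1}(F) = σ*(R^{n+1}(F))`, described by its generators `σ*(m_0⋯m_n)`. -/
def KSub (n : ℕ) : Submodule A (RPow A F n) :=
  Submodule.span A
    {x | ∃ m : Fin (n + 1) → F,
      x = mkR A F m + ∑ i ∈ Finset.Icc 1 n, mkR A F (rot F m i)}

/-- `K²(F) ⊆ T²(F) = F ⊗ F`: the kernel of `T²(F) → Λ²(F)`, i.e. the image of `1 + σ`. -/
def K2Sub : Submodule A (F ⊗[A] F) :=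
  Submodule.span A {x | ∃ u v : F, x = u ⊗ₜ[A] v + v ⊗ₜ[A] u}

/-- The word `m₀ ⋯ m_{p-1} u m'₀ ⋯ m'_{q-1}`. -/
def joinWord {p q : ℕ} (m : Fin p → F) (u : F) (m' : Fin q → F) :
    Fin (p + q + 1) → F := fun j =>
  if h : j.val < p then m ⟨j.val, h⟩
  else if _h2 : j.val < p + 1 then u
  else m' ⟨j.val - (p + 1), by have := j.isLt; omega⟩

/-- The concatenated word `m₀ ⋯ m_{p-1} m'₀ ⋯ m'_{q-1}`. -/
def appendWord {p q : ℕ} (m : Fin p → F) (m' : Fin q → F) : Fin (p + q) → F := fun j =>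
  if h : j.val < p then m ⟨j.val, h⟩
  else m' ⟨j.val - p, by have := j.isLt; omega⟩

/-- `mul` is the multiplication `R^{p+1}(F) × R^{q+1}(F) → R^{p+q+2}(F)` of the graded
algebra `R(F)`, recorded with values in `∏ₖ R^{k+1}(F)`:
`(s ⊗ u)·(s' ⊗ v) = (s u s') ⊗ v`. -/
def IsMulR (mul : ∀ p q, RPow A F p →ₗ[A] RPow A F q →ₗ[A] ∀ k, RPow A F k) : Prop :=
  ∀ (p q : ℕ) (m : Fin p → F) (u : F) (m' : Fin q → F) (v : F),
    mul p q (mkS A F m ⊗ₜ[A] u) (mkS A F m' ⊗ₜ[A] v)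
      = Pi.single (p + q + 1) (mkS A F (joinWord F m u m') ⊗ₜ[A] v)

/-- `mul` is the multiplication `S^p(F) × S^q(F) → S^{p+q}(F)` of the symmetric algebra,
recorded with values in `∏ₖ S^k(F)`. -/
def IsMulS (mul : ∀ p q, SymPow A F p →ₗ[A] SymPow A F q →ₗ[A] ∀ k, SymPow A F k) : Prop :=
  ∀ (p q : ℕ) (m : Fin p → F) (m' : Fin q → F),
    mul p q (mkS A F m) (mkS A F m') = Pi.single (p + q) (mkS A F (appendWord F m m'))

/-- `π` is the family of natural maps `R^{n+1}(F) = S^n(F) ⊗ F → S^{n+1}(F)`. -/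
def IsPi (π : ∀ n, RPow A F n →ₗ[A] SymPow A F (n + 1)) : Prop :=
  ∀ (n : ℕ) (m : Fin n → F) (v : F),
    π n (mkS A F m ⊗ₜ[A] v) = mkS A F (Fin.snoc m v)

/-- `T = (T₀, T₁, …)` is a (full) extended `D`-connection:  `T₀ = id_F` (under
`F ≅ R¹(F)`), and `T_i(am) = a T_i(m) + ∑_{j=1}^i (1/j) T_{j-1}(D a) T_{i-j}(m)`. -/
def IsExtConn [Algebra ℚ A] (D : A → F)
    (mul : ∀ p q, RPow A F p →ₗ[A] RPow A F q →ₗ[A] ∀ k, RPow A F k)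
    (T : ∀ i, F →+ RPow A F i) : Prop :=
  (∀ m : F, T 0 m = mkS A F (fun i : Fin 0 => i.elim0) ⊗ₜ[A] m) ∧
  ∀ (i : ℕ), 1 ≤ i → ∀ (a : A) (m : F),
    Pi.single i (T i (a • m))
      = Pi.single i (a • T i m)
        + ∑ j ∈ Finset.Icc 1 i,
            algebraMap ℚ A (1 / (j : ℚ)) •
              mul (j - 1) (i - j) (T (j - 1) (D a)) (T (i - j) m)

/-- `T = (T₀, …, T_N)` is an extended `D`-connection up to order `N`. -/
def IsExtConnTo [Algebra ℚ A] (D : A → F)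
    (mul : ∀ p q, RPow A F p →ₗ[A] RPow A F q →ₗ[A] ∀ k, RPow A F k)
    (N : ℕ) (T : ∀ i, F →+ RPow A F i) : Prop :=
  (∀ m : F, T 0 m = mkS A F (fun i : Fin 0 => i.elim0) ⊗ₜ[A] m) ∧
  ∀ (i : ℕ), 1 ≤ i → i ≤ N → ∀ (a : A) (m : F),
    Pi.single i (T i (a • m))
      = Pi.single i (a • T i m)
        + ∑ j ∈ Finset.Icc 1 i,
            algebraMap ℚ A (1 / (j : ℚ)) •
              mul (j - 1) (i - j) (T (j - 1) (D a)) (T (i - j) m)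

/-- The wedge map `F ⊗_A F →  Λ(F)`, `u ⊗ v ↦ u ∧ v`; an element of `F ⊗ F` maps to
zero in `Λ²(F)` iff its image under this map is zero. -/
def wedgeMap : F ⊗[A] F →ₗ[A] ExteriorAlgebra A F :=
  TensorProduct.lift
    ((LinearMap.mul A (ExteriorAlgebra A F)).compl₁₂ (ExteriorAlgebra.ι A) (ExteriorAlgebra.ι A))


section SwitchAux

variable {A F}

lemma mkS_comp_perm {n : ℕ} (w : Fin n → F) (e : Equiv.Perm (Fin n)) :
    mkS A F (w ∘ e) = mkS A F w := by
  unfold mkS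
  rw [Submodule.Quotient.eq]
  have h : (PiTensorProduct.tprod A (w ∘ e) : TPow A F n) - PiTensorProduct.tprod A w
      = -((PiTensorProduct.tprod A w : TPow A F n) - PiTensorProduct.tprod A (w ∘ e)) := by
    abel
  rw [h]
  exact neg_mem (Submodule.subset_span ⟨w, e, rfl⟩)

lemma mkS_update_add {n : ℕ} (m : Fin n → F) (k : Fin n) (x y : F) :
    mkS A F (Function.update m k (x + y))
      = mkS A F (Function.update m k x) + mkS A F (Function.update m k y) := by
  unfold mkS
  rw [(PiTensorProduct.tprod A).map_update_add m k x y, Submodule.Quotient.mk_add]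

lemma mkS_update_smul {n : ℕ} (m : Fin n → F) (k : Fin n) (c : A) (x : F) :
    mkS A F (Function.update m k (c • x)) = c • mkS A F (Function.update m k x) := by
  unfold mkS
  rw [(PiTensorProduct.tprod A).map_update_smul m k c x, Submodule.Quotient.mk_smul]

/-- The core multilinear map: `m ↦ (u ↦ ∑ k, (m with slot k replaced by u) ⊗ m k)`. -/
def swML (n : ℕ) : MultilinearMap A (fun _ : Fin n => F) (F →ₗ[A] RPow A F n) where
  toFun m :=
    { toFun := fun u => ∑ k : Fin n, mkS A F (Function.update m k u) ⊗ₜ[A] m k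
      map_add' := by
        intro u v
        rw [← Finset.sum_add_distrib]
        refine Finset.sum_congr rfl fun k _ => ?_
        rw [mkS_update_add, TensorProduct.add_tmul]
      map_smul' := by
        intro c u
        simp only [RingHom.id_apply]
        rw [Finset.smul_sum]
        refine Finset.sum_congr rfl fun k _ => ?_
        rw [mkS_update_smul, TensorProduct.smul_tmul'] }
  map_update_add' := by
    intro inst m j x y
    have hinst : inst = instDecidableEqFin n := Subsingleton.elim _ _
    subst hinst
    apply LinearMap.ext
    intro u
    simp only [LinearMap.coe_mk, AddHom.coe_mk, LinearMap.add_apply]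
    rw [← Finset.sum_add_distrib]
    refine Finset.sum_congr rfl fun k _ => ?_
    by_cases hk : k = j
    · subst hk
      rw [Function.update_idem, Function.update_idem, Function.update_idem,
        Function.update_self, Function.update_self, Function.update_self,
        TensorProduct.tmul_add]
    · rw [← Function.update_comm hk, ← Function.update_comm hk, ← Function.update_comm hk,
        mkS_update_add, Function.update_of_ne hk, Function.update_of_ne hk,
        Function.update_of_ne hk, TensorProduct.add_tmul]
  map_update_smul' := by
    intro inst m j c x
    have hinst : inst = instDecidableEqFin n := Subsingleton.elim _ _
    subst hinst
    apply LinearMap.ext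
    intro u
    simp only [LinearMap.coe_mk, AddHom.coe_mk, LinearMap.smul_apply]
    rw [Finset.smul_sum]
    refine Finset.sum_congr rfl fun k _ => ?_
    by_cases hk : k = j
    · subst hk
      rw [Function.update_idem, Function.update_idem, Function.update_self,
        Function.update_self, TensorProduct.tmul_smul]
    · rw [← Function.update_comm hk, ← Function.update_comm hk, mkS_update_smul,
        Function.update_of_ne hk, Function.update_of_ne hk, TensorProduct.smul_tmul']

/-- The lift of `swML` to the tensor power. -/
def swT (n : ℕ) : TPow A F n →ₗ[A] (F →ₗ[A] RPow A F n) :=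
  PiTensorProduct.lift (swML n)

lemma swT_tprod {n : ℕ} (m : Fin n → F) (u : F) :
    swT n (PiTensorProduct.tprod A m) u
      = ∑ k : Fin n, mkS A F (Function.update m k u) ⊗ₜ[A] m k := by
  simp [swT, swML]

lemma swT_vanish (n : ℕ) : symRel A F n ≤ LinearMap.ker (swT (A := A) (F := F) n) := by
  show Submodule.span A _ ≤ _
  rw [Submodule.span_le]
  rintro x ⟨m, e, rfl⟩
  simp only [SetLike.mem_coe, LinearMap.mem_ker, map_sub, sub_eq_zero]
  apply LinearMap.ext
  intro u
  rw [swT_tprod, swT_tprod]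
  rw [← Equiv.sum_comp e (fun k => mkS A F (Function.update m k u) ⊗ₜ[A] m k)]
  refine Finset.sum_congr rfl fun k _ => ?_
  have h1 : Function.update (m ∘ e) k u = (Function.update m (e k) u) ∘ e := by
    rw [Function.update_comp_equiv]
    simp
  rw [h1, mkS_comp_perm]
  rfl

instance swAuxACG (n : ℕ) : AddCommGroup (RPow A F n) := TensorProduct.addCommGroup

/-- The switch operator. -/
def sw (n : ℕ) : RPow A F n →ₗ[A] RPow A F n :=
  TensorProduct.lift (Submodule.liftQ _ (swT n) (swT_vanish n))

lemma sw_apply {n : ℕ} (m : Fin n → F) (u : F) :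
    sw n (mkS A F m ⊗ₜ[A] u)
      = ∑ k : Fin n, mkS A F (Function.update m k u) ⊗ₜ[A] m k := by
  rw [sw, TensorProduct.lift.tmul]
  show swT n (PiTensorProduct.tprod A m) u = _
  rw [swT_tprod]

end SwitchAux

/-- The switch operator is a well-defined `A`-linear map on
`R^n(F) = S^{n-1}(F) ⊗ F` (here `RPow A F n = R^{n+1}(F)`). -/
theorem switch_wellDefined (n : ℕ) :
    ∃ σ : RPow A F n →ₗ[A] RPow A F n, IsSwitch A F n σ := by
  refine ⟨sw n, fun m => ?_⟩
  set w : Fin n → F := fun i : Fin n => m i.castSucc with hwdef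
  have hmkR : mkR A F m = mkS A F w ⊗ₜ[A] m (Fin.last n) := rfl
  rw [hmkR, sw_apply]
  refine Finset.sum_bij' (i := fun (k : Fin n) _ => n - k.val)
    (j := fun (i : ℕ) (hi : i ∈ Finset.Icc 1 n) =>
      (⟨n - i, by have := (Finset.mem_Icc.mp hi).1; have := (Finset.mem_Icc.mp hi).2; omega⟩ : Fin n))
    (fun k _ => by
      have := k.isLt
      exact Finset.mem_Icc.mpr (show 1 ≤ n - (k : ℕ) ∧ n - (k : ℕ) ≤ n by omega))
    (fun i hi => Finset.mem_univ _)
    (fun k _ => by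
      have := k.isLt
      apply Fin.ext
      show n - (n - (k : ℕ)) = (k : ℕ)
      omega)
    (fun i hi => by
      have h := Finset.mem_Icc.mp hi
      show n - (n - i) = i
      omega)
    (fun k _ => ?_)
  -- term equality
  have hk := k.isLt
  set i : ℕ := n - k.val with hidef
  have hi1 : 1 ≤ i := by omega
  have hin : i ≤ n := by omega
  have hki : (k : ℕ) = n - i := by omega
  let f : Fin n → Fin n := fun j =>
    if h0 : (j : ℕ) = 0 then k
    else if h1 : (j : ℕ) < i then ⟨n - (j : ℕ), by have := j.isLt; omega⟩
    else ⟨(j : ℕ) - i, by have := j.isLt; omega⟩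
  have hinj : Function.Injective f := by
    intro a b hab
    have ha := a.isLt; have hb := b.isLt
    have h := congrArg Fin.val hab
    simp only [f, apply_dite Fin.val, Fin.val_mk] at h
    apply Fin.ext
    split_ifs at h <;> omega
  let e : Equiv.Perm (Fin n) := Equiv.ofBijective f (Finite.injective_iff_bijective.mp hinj)
  have hw : (fun j : Fin n => rot F m i j.castSucc)
      = (Function.update w k (m (Fin.last n))) ∘ e := by
    funext j
    have hj := j.isLt
    show rot F m i j.castSucc = Function.update w k (m (Fin.last n)) (f j)
    by_cases h0 : (j : ℕ) = 0
    · have hfj : f j = k := by simp only [f]; rw [dif_pos h0]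
      rw [hfj, Function.update_self]
      have hrot : rot F m i j.castSucc = m ⟨n - (j : ℕ), by omega⟩ := by
        simp only [rot, Fin.coe_castSucc]
        rw [if_pos (by omega)]
      rw [hrot]
      congr 1
      apply Fin.ext
      show n - (j : ℕ) = n
      omega
    · by_cases h1 : (j : ℕ) < i
      · have hfj : f j = ⟨n - (j : ℕ), by omega⟩ := by
          simp only [f]; rw [dif_neg h0, dif_pos h1]
        rw [hfj, Function.update_of_ne (by
          apply Fin.ne_of_val_ne
          show n - (j : ℕ) ≠ (k : ℕ)
          omega)]
        have hrot : rot F m i j.castSucc = m ⟨n - (j : ℕ), by omega⟩ := by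
          simp only [rot, Fin.coe_castSucc]
          rw [if_pos h1]
        rw [hrot]
        rfl
      · have hfj : f j = ⟨(j : ℕ) - i, by omega⟩ := by
          simp only [f]; rw [dif_neg h0, dif_neg h1]
        rw [hfj, Function.update_of_ne (by
          apply Fin.ne_of_val_ne
          show (j : ℕ) - i ≠ (k : ℕ)
          omega)]
        have hrot : rot F m i j.castSucc = m ⟨(j : ℕ) - i, by omega⟩ := by
          simp only [rot, Fin.coe_castSucc]
          rw [if_neg h1]
        rw [hrot]
        rfl
  have h2 : rot F m i (Fin.last n) = w k := by
    have hrot : rot F m i (Fin.last n) = m ⟨n - i, by omega⟩ := by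
      simp only [rot, Fin.val_last]
      rw [if_neg (by omega)]
    rw [hrot]
    show m _ = m k.castSucc
    congr 1
    apply Fin.ext
    show n - i = (k : ℕ)
    omega
  show mkS A F (Function.update w k (m (Fin.last n))) ⊗ₜ[A] w k = mkR A F (rot F m i)
  simp only [mkR]
  rw [h2, show (fun j : Fin n => rot F m i j.castSucc)
      = (Function.update w k (m (Fin.last n))) ∘ e from hw, mkS_comp_perm]

end
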